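/- For all positive integers m and n, ∑_{r_1,…,r_{3m} ≤ n} ∏_{k=1}^{3m} qbinom(n-r_k, r_{k+1}) · q^{C(r_k,2)} · (-1)^{r_k} = (-1)^{mn} (n+1) q^{m·C(n,2)}, where r_{3m+1} := r_1, as an identity of polynomials in q. -/

import Mathlib

open Finset

/-- The Gaussian (q-)binomial coefficient as a rational function in `q = RatFunc.X`. -/
noncomputable def qbin (a b : ℕ) : RatFunc ℚ :=
  if b ≤ a then ∏ i ∈ Finset.range b,
    (1 - RatFunc.X ^ (a - i)) / (1 - RatFunc.X ^ (i + 1)) else 0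

local notation "X" => (RatFunc.X : RatFunc ℚ)

lemma Xpow_ne_one {k : ℕ} (hk : 0 < k) : X ^ k ≠ 1 := by
  intro h
  rw [← RatFunc.algebraMap_X (K := ℚ), ← map_pow,
    ← map_one (algebraMap (Polynomial ℚ) (RatFunc ℚ))] at h
  have h2 := congrArg Polynomial.natDegree (RatFunc.algebraMap_injective ℚ h)
  simp [Polynomial.natDegree_X_pow] at h2
  omega

lemma one_sub_Xpow_ne {k : ℕ} (hk : 0 < k) : 1 - X ^ k ≠ 0 := by
  intro h
  exact Xpow_ne_one hk (by linear_combination -h)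

noncomputable def qfac (k : ℕ) : RatFunc ℚ := ∏ i ∈ range k, (1 - X ^ (i + 1))

lemma qfac_ne_zero (k : ℕ) : qfac k ≠ 0 :=
  Finset.prod_ne_zero_iff.2 fun i _ => one_sub_Xpow_ne (Nat.succ_pos i)

lemma qfac_succ (k : ℕ) : qfac (k + 1) = qfac k * (1 - X ^ (k + 1)) :=
  Finset.prod_range_succ _ _

lemma qbin_eq {a b : ℕ} (h : b ≤ a) :
    qbin a b = qfac a / (qfac b * qfac (a - b)) := by
  have key : ∀ b ≤ a, qfac a = qfac (a - b) * ∏ i ∈ range b, (1 - X ^ (a - i)) := by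
    intro b hb
    induction b with
    | zero => simp
    | succ c ih =>
      rw [prod_range_succ, ← mul_assoc, show a - c = (a - (c+1)) + 1 by omega, qfac_succ,
        show a - (c+1) + 1 = a - c by omega] at *
      rw [ih (by omega), mul_assoc, mul_assoc, mul_comm (1 - X ^ (a - c))]
  rw [qbin, if_pos h, Finset.prod_div_distrib]
  have hn : ∏ i ∈ range b, (1 - X ^ (a - i)) = qfac a / qfac (a - b) := by
    rw [key b h, mul_comm, mul_div_assoc, div_self (qfac_ne_zero _), mul_one]
  rw [hn, show ∏ x ∈ range b, (1 - X ^ (x+1)) = qfac b from rfl, div_div, mul_comm]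

lemma qbin_zero (a : ℕ) : qbin a 0 = 1 := by simp [qbin]

lemma qbin_of_lt {a b : ℕ} (h : a < b) : qbin a b = 0 := by
  rw [qbin, if_neg (by omega)]

lemma qbin_self (a : ℕ) : qbin a a = 1 := by
  rw [qbin_eq le_rfl]
  simp only [Nat.sub_self]
  rw [show qfac 0 = 1 from rfl, mul_one, div_self (qfac_ne_zero a)]

lemma qbin_symm {a b : ℕ} (h : b ≤ a) : qbin a b = qbin a (a - b) := by
  rw [qbin_eq h, qbin_eq (by omega), show a - (a - b) = b by omega, mul_comm]

lemma pascal1 (a s : ℕ) :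
    qbin (a + 1) (s + 1) = qbin a s + X ^ (s + 1) * qbin a (s + 1) := by
  rcases lt_trichotomy s a with h | rfl | h
  · obtain ⟨d, rfl⟩ : ∃ d, a = s + 1 + d := ⟨a - s - 1, by omega⟩
    rw [qbin_eq (by omega), qbin_eq (by omega), qbin_eq (by omega),
      show s + 1 + d + 1 - (s + 1) = d + 1 by omega,
      show s + 1 + d - s = d + 1 by omega,
      show s + 1 + d - (s + 1) = d by omega,
      qfac_succ (s + 1 + d), qfac_succ s, qfac_succ d]
    have h1 := qfac_ne_zero (s + 1 + d)
    have h2 := qfac_ne_zero s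
    have h3 := qfac_ne_zero d
    have h4 := one_sub_Xpow_ne (k := s + 1) (by omega)
    have h5 := one_sub_Xpow_ne (k := d + 1) (by omega)
    field_simp
    ring_nf
  · rw [qbin_self, qbin_self, qbin_of_lt (by omega), mul_zero, add_zero]
  · rw [qbin_of_lt (by omega), qbin_of_lt (by omega), qbin_of_lt (by omega),
      mul_zero, add_zero]

lemma pascal2 (m t : ℕ) :
    qbin (m + 1) (t + 1) = X ^ (m - t) * qbin m t + qbin m (t + 1) := by
  rcases lt_trichotomy t m with h | rfl | h
  · obtain ⟨d, rfl⟩ : ∃ d, m = t + 1 + d := ⟨m - t - 1, by omega⟩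
    rw [qbin_eq (by omega), qbin_eq (by omega), qbin_eq (by omega),
      show t + 1 + d + 1 - (t + 1) = d + 1 by omega,
      show t + 1 + d - t = d + 1 by omega,
      show t + 1 + d - (t + 1) = d by omega,
      qfac_succ (t + 1 + d), qfac_succ t, qfac_succ d]
    have h1 := qfac_ne_zero (t + 1 + d)
    have h2 := qfac_ne_zero t
    have h3 := qfac_ne_zero d
    have h4 := one_sub_Xpow_ne (k := t + 1) (by omega)
    have h5 := one_sub_Xpow_ne (k := d + 1) (by omega)
    field_simp
    ring_nf
  · rw [qbin_self, qbin_self, qbin_of_lt (by omega), Nat.sub_self, pow_zero,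
      one_mul, add_zero]
  · rw [qbin_of_lt (by omega), qbin_of_lt (by omega), qbin_of_lt (by omega),
      mul_zero, add_zero]

lemma subsub (r j u : ℕ) :
    qbin r j * qbin (r - j) u = qbin r u * qbin (r - u) j := by
  by_cases h : j + u ≤ r
  · obtain ⟨d, rfl⟩ : ∃ d, r = j + u + d := ⟨r - j - u, by omega⟩
    rw [qbin_eq (by omega), qbin_eq (by omega), qbin_eq (by omega), qbin_eq (by omega),
      show j + u + d - j = u + d by omega, show u + d - u = d by omega,
      show j + u + d - u = j + d by omega, show j + d - j = d by omega]
    have h1 := qfac_ne_zero (j + u + d)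
    have h2 := qfac_ne_zero j
    have h3 := qfac_ne_zero u
    have h4 := qfac_ne_zero d
    have h5 := qfac_ne_zero (u + d)
    have h6 := qfac_ne_zero (j + d)
    field_simp
  · rcases le_or_gt j r with hj | hj
    · rcases le_or_gt u r with hu | hu
      · rw [qbin_of_lt (a := r - j) (by omega), qbin_of_lt (a := r - u) (by omega),
          mul_zero, mul_zero]
      · rw [qbin_of_lt (a := r - j) (by omega), qbin_of_lt (a := r) hu,
          mul_zero, zero_mul]
    · rw [qbin_of_lt hj, zero_mul]
      rcases le_or_gt u r with hu | hu
      · rw [qbin_of_lt (a := r - u) (by omega), mul_zero]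
      · rw [qbin_of_lt hu, zero_mul]

lemma choose_two_succ (j : ℕ) : (j + 1).choose 2 = j.choose 2 + j := by
  rw [Nat.choose_succ_succ, Nat.choose_one_right, Nat.add_comm]

lemma alt_sum_succ (K : ℕ) :
    ∑ j ∈ range (K + 2), (-1 : RatFunc ℚ) ^ j * X ^ (j.choose 2) * qbin (K + 1) j = 0 := by
  set g : ℕ → RatFunc ℚ := fun j => (-1) ^ j * X ^ (j.choose 2 + j) * qbin K j with hg
  rw [Finset.sum_range_succ']
  have e1 : ∀ j ∈ range (K + 1),
      (-1 : RatFunc ℚ) ^ (j + 1) * X ^ ((j + 1).choose 2) * qbin (K + 1) (j + 1)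
        = g (j + 1) - g j := by
    intro j hj
    simp only [hg]
    rw [pascal1, choose_two_succ]
    ring
  rw [Finset.sum_congr rfl e1, Finset.sum_range_sub g]
  have hgK : g (K + 1) = 0 := by
    simp only [hg]; rw [qbin_of_lt (by omega)]; ring
  have hg0 : g 0 = 1 := by
    simp only [hg]; rw [qbin_zero]; norm_num
  rw [hgK, hg0, qbin_zero]
  norm_num

lemma key (a : ℕ) : ∀ n t : ℕ, a ≤ n → t ≤ n →
    ∑ s ∈ range (a + 1), (-1 : RatFunc ℚ) ^ s * X ^ (s.choose 2) * qbin a s * qbin (n - s) t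
      = X ^ (a * (n - t)) * qbin (n - a) (n - t) := by
  induction a with
  | zero =>
    intro n t _ ht
    rw [Finset.sum_range_one]
    simp only [pow_zero, Nat.choose_zero_right, qbin_zero, Nat.sub_zero, Nat.zero_mul, one_mul,
      mul_one]
    rw [show Nat.choose 0 2 = 0 from rfl, pow_zero, one_mul]
    exact qbin_symm ht
  | succ a ih =>
    intro n t ha ht
    set G : ℕ → RatFunc ℚ :=
      fun j => (-1) ^ j * X ^ (j.choose 2 + j) * qbin a j * qbin (n - j) t with hG
    set H : ℕ → RatFunc ℚ :=
      fun j => (-1) ^ j * X ^ (j.choose 2 + j) * qbin a j * qbin (n - (j + 1)) t with hH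
    have step1 : ∑ s ∈ range (a + 1 + 1),
        (-1 : RatFunc ℚ) ^ s * X ^ (s.choose 2) * qbin (a + 1) s * qbin (n - s) t
        = ∑ j ∈ range (a + 1), (G j - H j) := by
      rw [Finset.sum_range_succ']
      have e1 : ∀ j ∈ range (a + 1),
          (-1 : RatFunc ℚ) ^ (j + 1) * X ^ ((j + 1).choose 2) * qbin (a + 1) (j + 1) *
              qbin (n - (j + 1)) t
            = (G (j + 1) - G j) + (G j - H j) := by
        intro j hj
        rw [sub_add_sub_cancel]
        simp only [hG, hH]
        rw [pascal1, choose_two_succ]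
        ring
      rw [Finset.sum_congr rfl e1, Finset.sum_add_distrib, Finset.sum_range_sub G]
      have hGa : G (a + 1) = 0 := by
        simp only [hG]; rw [qbin_of_lt (by omega)]; ring
      have hG0 : G 0 = qbin n t := by
        simp only [hG]; rw [qbin_zero]; norm_num
      rw [hGa, hG0]
      rw [show Nat.choose 0 2 = 0 from rfl]
      simp only [pow_zero, qbin_zero, Nat.sub_zero, one_mul, mul_one]
      ring
    rw [step1]
    rcases t with _ | t'
    · have e0 : ∀ j ∈ range (a + 1), G j - H j = 0 := by
        intro j hj
        simp only [hG, hH, qbin_zero]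
        ring
      rw [Finset.sum_congr rfl e0, Finset.sum_const_zero,
        qbin_of_lt (show n - (a + 1) < n - 0 by omega), mul_zero]
    · have e2 : ∀ j ∈ range (a + 1), G j - H j
          = X ^ (n - 1 - t') * ((-1 : RatFunc ℚ) ^ j * X ^ (j.choose 2) * qbin a j *
            qbin (n - 1 - j) t') := by
        intro j hj
        simp only [hG, hH, mem_range] at *
        rw [show n - j = (n - 1 - j) + 1 by omega, show n - (j + 1) = n - 1 - j by omega,
          pascal2]
        by_cases hc : t' ≤ n - 1 - j
        · obtain ⟨d, hd1, hd2⟩ : ∃ d, n - 1 - j - t' = d ∧ n - 1 - t' = j + d :=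
            ⟨n - 1 - j - t', rfl, by omega⟩
          rw [hd1, hd2]
          ring
        · rw [qbin_of_lt (show n - 1 - j < t' by omega)]
          ring
      rw [Finset.sum_congr rfl e2, ← Finset.mul_sum, ih (n - 1) t' (by omega) (by omega),
        show n - 1 - a = n - (a + 1) by omega, show n - 1 - t' = n - (t' + 1) by omega,
        ← mul_assoc, ← pow_add,
        show n - (t' + 1) + a * (n - (t' + 1)) = (a + 1) * (n - (t' + 1)) by ring]

lemma C2_add (x y : ℕ) : (x + y).choose 2 = x.choose 2 + y.choose 2 + x * y := by
  induction y with
  | zero => simp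
  | succ c ih => rw [← Nat.add_assoc, choose_two_succ, choose_two_succ, ih]; ring

lemma key' (n r t : ℕ) (hr : r ≤ n) (ht : t ≤ n) :
    ∑ s ∈ range (n + 1), (-1 : RatFunc ℚ) ^ s * X ^ (s.choose 2) * qbin (n - r) s * qbin (n - s) t
      = X ^ ((n - r) * (n - t)) * qbin r (n - t) := by
  rw [← Finset.sum_subset (Finset.range_subset_range.2 (show n - r + 1 ≤ n + 1 by omega))
    (fun s _ hs => by
      rw [qbin_of_lt (show n - r < s by simp only [mem_range] at hs ⊢; omega)]
      ring)]
  rw [key (n - r) n t (by omega) ht, show n - (n - r) = r by omega]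

lemma alt_zero_bin (R : ℕ) : ∑ j ∈ range (R + 1),
    (-1 : RatFunc ℚ) ^ j * X ^ (j.choose 2) * qbin 0 j = 1 := by
  rw [Finset.sum_range_succ']
  have e : ∀ j ∈ range R, (-1 : RatFunc ℚ) ^ (j+1) * X ^ ((j+1).choose 2) * qbin 0 (j+1) = 0 := by
    intro j _
    rw [qbin_of_lt (Nat.succ_pos j)]; ring
  rw [Finset.sum_congr rfl e, Finset.sum_const_zero, qbin_zero]
  norm_num

lemma alt_pos_bin (R K : ℕ) (hK : 0 < K) (hKR : K ≤ R) : ∑ j ∈ range (R + 1),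
    (-1 : RatFunc ℚ) ^ j * X ^ (j.choose 2) * qbin K j = 0 := by
  rw [← Finset.sum_subset (Finset.range_subset_range.2 (show K + 1 ≤ R + 1 by omega))
    (fun s _ hs => by
      rw [qbin_of_lt (show K < s by simp only [mem_range] at hs ⊢; omega)]
      ring)]
  rw [show K = (K - 1) + 1 by omega] at *
  exact alt_sum_succ (K - 1)

lemma M3sum (n r u : ℕ) (hr : r ≤ n) (hu : u ≤ n) :
    ∑ t ∈ range (n + 1), ((-1 : RatFunc ℚ) ^ r * X ^ (r.choose 2 + (n - r) * (n - t)) *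
        qbin r (n - t)) * (qbin (n - t) u * X ^ (t.choose 2) * (-1) ^ t)
      = if r = u then (-1 : RatFunc ℚ) ^ n * X ^ (n.choose 2) else 0 := by
  rw [← Finset.sum_subset (show Finset.Ico (n - r) (n + 1) ⊆ range (n + 1) by
      intro x hx; simp only [mem_range, mem_Ico] at *; omega)
    (fun t ht hts => by
      have : n - t > r := by simp only [mem_range, mem_Ico] at *; omega
      rw [qbin_of_lt this]; ring)]
  rw [Finset.sum_Ico_eq_sum_range, show n + 1 - (n - r) = r + 1 by omega]
  have e : ∀ j ∈ range (r + 1),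
      ((-1 : RatFunc ℚ) ^ r * X ^ (r.choose 2 + (n - r) * (n - (n - r + j))) *
        qbin r (n - (n - r + j))) * (qbin (n - (n - r + j)) u * X ^ ((n - r + j).choose 2) *
        (-1) ^ (n - r + j))
      = ((-1 : RatFunc ℚ) ^ n * X ^ (n.choose 2)) *
          (qbin r u * ((-1) ^ j * X ^ (j.choose 2) * qbin (r - u) j)) := by
    intro j hj
    have hjr : j ≤ r := by simp only [mem_range] at hj; omega
    rw [show n - (n - r + j) = r - j by omega, ← qbin_symm hjr]
    have hS : (-1 : RatFunc ℚ) ^ r * (-1) ^ (n - r + j) = (-1) ^ n * (-1) ^ j := by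
      rw [← pow_add, ← pow_add]; congr 1; omega
    have hnat : r.choose 2 + (n - r) * (r - j) + (n - r + j).choose 2
        = n.choose 2 + j.choose 2 := by
      have h1 := C2_add (n - r) j
      have h2 := C2_add r (n - r)
      have h3 : (n - r) * (r - j) + (n - r) * j = (n - r) * r := by
        rw [← Nat.mul_add, Nat.sub_add_cancel hjr]
      have h4 : r + (n - r) = n := by omega
      have h5 : (n - r) * r = r * (n - r) := Nat.mul_comm _ _
      rw [h4] at h2
      omega
    have hX : X ^ (r.choose 2 + (n - r) * (r - j)) * X ^ ((n - r + j).choose 2)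
        = X ^ (n.choose 2) * X ^ (j.choose 2) := by
      rw [← pow_add, ← pow_add, hnat]
    calc ((-1 : RatFunc ℚ) ^ r * X ^ (r.choose 2 + (n - r) * (r - j)) * qbin r j) *
          (qbin (r - j) u * X ^ ((n - r + j).choose 2) * (-1) ^ (n - r + j))
        = ((-1 : RatFunc ℚ) ^ r * (-1) ^ (n - r + j)) *
            (X ^ (r.choose 2 + (n - r) * (r - j)) * X ^ ((n - r + j).choose 2)) *
            (qbin r j * qbin (r - j) u) := by ring
      _ = ((-1 : RatFunc ℚ) ^ n * (-1) ^ j) * (X ^ (n.choose 2) * X ^ (j.choose 2)) *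
            (qbin r u * qbin (r - u) j) := by rw [hS, hX, subsub]
      _ = ((-1 : RatFunc ℚ) ^ n * X ^ (n.choose 2)) *
            (qbin r u * ((-1) ^ j * X ^ (j.choose 2) * qbin (r - u) j)) := by ring
  rw [Finset.sum_congr rfl e, ← Finset.mul_sum, ← Finset.mul_sum]
  rcases lt_trichotomy r u with h | rfl | h
  · rw [if_neg (by omega), qbin_of_lt h]
    ring
  · rw [if_pos rfl, qbin_self, Nat.sub_self, alt_zero_bin]
    ring
  · rw [if_neg (by omega), alt_pos_bin r (r - u) (by omega) (by omega)]
    ring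

lemma castSucc_add_one' {L : ℕ} (k : Fin L) : k.castSucc + 1 = k.succ := by
  ext
  rw [Fin.add_def, Fin.val_one']
  simp only [Fin.coe_castSucc, Fin.val_succ]
  have h := k.isLt
  have h1 : 1 % (L + 1) = 1 := Nat.mod_eq_of_lt (by omega)
  rw [h1, Nat.mod_eq_of_lt (by omega)]

lemma pathsum {ι : Type*} [Fintype ι] [DecidableEq ι] (M : Matrix ι ι (RatFunc ℚ)) :
    ∀ (c : ℕ) (g : ι → ι → RatFunc ℚ),
    ∑ f : Fin (c + 1) → ι,
        (∏ k : Fin c, M (f k.castSucc) (f k.succ)) * g (f 0) (f (Fin.last c))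
      = ∑ i, ∑ j, (M ^ c) i j * g i j := by
  intro c
  induction c with
  | zero =>
    intro g
    rw [Fintype.sum_equiv (Equiv.funUnique (Fin 1) ι)
      (fun f => (∏ k : Fin 0, M (f k.castSucc) (f k.succ)) * g (f 0) (f (Fin.last 0)))
      (fun i => g i i) (fun f => by simp [Fin.last])]
    simp [Matrix.one_apply, ite_mul]
  | succ c ih =>
    intro g
    rw [← Fintype.sum_equiv (Fin.consEquiv (fun _ : Fin (c + 2) => ι))
      (fun p : ι × (Fin (c + 1) → ι) =>
        (M p.1 (p.2 0) * ∏ k : Fin c, M (p.2 k.castSucc) (p.2 k.succ)) *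
          g p.1 (p.2 (Fin.last c)))
      (fun f => (∏ k : Fin (c + 1), M (f k.castSucc) (f k.succ)) * g (f 0) (f (Fin.last (c + 1))))
      (fun p => by
        obtain ⟨x, h⟩ := p
        simp only [Fin.consEquiv_apply]
        rw [Fin.prod_univ_succ,
          show Fin.last (c + 1) = (Fin.last c).succ from rfl]
        simp only [Fin.castSucc_zero, Fin.cons_zero, Fin.cons_succ, Fin.succ_castSucc]
        congr 1)]
    rw [Fintype.sum_prod_type]
    have inner : ∀ x : ι,
        ∑ h : Fin (c + 1) → ι, (M x (h 0) * ∏ k : Fin c, M (h k.castSucc) (h k.succ)) *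
          g x (h (Fin.last c))
        = ∑ i, ∑ j, (M ^ c) i j * (M x i * g x j) := by
      intro x
      rw [← ih (fun i j => M x i * g x j)]
      apply Finset.sum_congr rfl
      intro h _
      ring
    rw [Finset.sum_congr rfl (fun x _ => inner x)]
    apply Finset.sum_congr rfl
    intro x _
    rw [Finset.sum_comm]
    apply Finset.sum_congr rfl
    intro j _
    rw [pow_succ', Matrix.mul_apply, Finset.sum_mul]
    apply Finset.sum_congr rfl
    intro i _
    ring

lemma cyc {ι : Type*} [Fintype ι] [DecidableEq ι] (M : Matrix ι ι (RatFunc ℚ)) (L : ℕ) :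
    ∑ f : Fin (L + 1) → ι, ∏ k : Fin (L + 1), M (f k) (f (k + 1))
      = Matrix.trace (M ^ (L + 1)) := by
  have e : ∀ f : Fin (L + 1) → ι, ∏ k : Fin (L + 1), M (f k) (f (k + 1))
      = (∏ k : Fin L, M (f k.castSucc) (f k.succ)) *
        (fun i j => M j i) (f 0) (f (Fin.last L)) := by
    intro f
    rw [Fin.prod_univ_castSucc]
    congr 1
    · apply Finset.prod_congr rfl
      intro k _
      rw [castSucc_add_one' k]
    · rw [Fin.last_add_one]
  rw [Finset.sum_congr rfl (fun f _ => e f), pathsum M L (fun i j => M j i)]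
  rw [Matrix.trace, pow_succ]
  apply Finset.sum_congr rfl
  intro i _
  rw [Matrix.diag_apply, Matrix.mul_apply]

lemma cyc' {ι : Type*} [Fintype ι] [DecidableEq ι] (M : Matrix ι ι (RatFunc ℚ)) (L : ℕ)
    [NeZero L] :
    ∑ f : Fin L → ι, ∏ k : Fin L, M (f k) (f (k + 1)) = Matrix.trace (M ^ L) := by
  obtain ⟨c, rfl⟩ : ∃ c, L = c + 1 := ⟨L - 1, by have := NeZero.pos L; omega⟩
  exact cyc M c

noncomputable def Mq (n : ℕ) : Matrix (Fin (n + 1)) (Fin (n + 1)) (RatFunc ℚ) :=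
  Matrix.of fun r s =>
    qbin (n - (r : ℕ)) (s : ℕ) * X ^ ((r : ℕ).choose 2) * (-1) ^ (r : ℕ)

lemma Mq_sq_apply (n : ℕ) (r t : Fin (n + 1)) :
    (Mq n * Mq n) r t = (-1) ^ (r : ℕ) *
      X ^ ((r : ℕ).choose 2 + (n - (r : ℕ)) * (n - (t : ℕ))) * qbin (r : ℕ) (n - (t : ℕ)) := by
  rw [Matrix.mul_apply]
  have h1 : ∑ s : Fin (n + 1), Mq n r s * Mq n s t
      = ∑ x ∈ range (n + 1), ((-1 : RatFunc ℚ) ^ (r : ℕ) * X ^ ((r : ℕ).choose 2)) *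
        ((-1) ^ x * X ^ (x.choose 2) * qbin (n - (r : ℕ)) x * qbin (n - x) (t : ℕ)) := by
    rw [← Fin.sum_univ_eq_sum_range (fun x => ((-1 : RatFunc ℚ) ^ (r : ℕ) *
      X ^ ((r : ℕ).choose 2)) *
        ((-1) ^ x * X ^ (x.choose 2) * qbin (n - (r : ℕ)) x * qbin (n - x) (t : ℕ))) (n + 1)]
    apply Finset.sum_congr rfl
    intro s _
    simp only [Mq, Matrix.of_apply]
    ring
  rw [h1, ← Finset.mul_sum, key' n (r : ℕ) (t : ℕ) r.is_le t.is_le, pow_add]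
  ring

set_option synthInstance.maxHeartbeats 1000000 in
lemma Mq_cube (n : ℕ) :
    Mq n ^ 3 = ((-1 : RatFunc ℚ) ^ n * X ^ (n.choose 2)) •
      (1 : Matrix (Fin (n + 1)) (Fin (n + 1)) (RatFunc ℚ)) := by
  ext r u
  rw [show (3 : ℕ) = 2 + 1 from rfl, pow_succ, pow_two, Matrix.mul_apply]
  have h1 : ∑ t : Fin (n + 1), (Mq n * Mq n) r t * Mq n t u
      = ∑ t ∈ range (n + 1), ((-1 : RatFunc ℚ) ^ (r : ℕ) *
          X ^ ((r : ℕ).choose 2 + (n - (r : ℕ)) * (n - t)) * qbin (r : ℕ) (n - t)) *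
        (qbin (n - t) (u : ℕ) * X ^ (t.choose 2) * (-1) ^ t) := by
    rw [← Fin.sum_univ_eq_sum_range (fun x => ((-1 : RatFunc ℚ) ^ (r : ℕ) *
        X ^ ((r : ℕ).choose 2 + (n - (r : ℕ)) * (n - x)) * qbin (r : ℕ) (n - x)) *
      (qbin (n - x) (u : ℕ) * X ^ (x.choose 2) * (-1) ^ x)) (n + 1)]
    apply Finset.sum_congr rfl
    intro t _
    rw [Mq_sq_apply]
    simp only [Mq, Matrix.of_apply]
  rw [h1, M3sum n (r : ℕ) (u : ℕ) r.is_le u.is_le, Matrix.smul_apply, Matrix.one_apply,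
    smul_eq_mul]
  rcases eq_or_ne r u with h | h
  · rw [if_pos h, if_pos (by rw [h]), mul_one]
  · rw [if_neg h, if_neg (fun hc => h (Fin.ext hc)), mul_zero]

theorem stmt7 (m n : ℕ) (hm : 0 < m) (hn : 0 < n) :
    ∑ r : Fin (3 * m) → Fin (n + 1), ∏ k : Fin (3 * m),
      (qbin (n - (r k : ℕ)) (r ⟨((k : ℕ) + 1) % (3 * m), Nat.mod_lt _ (by omega)⟩ : ℕ) *
        RatFunc.X ^ ((r k : ℕ)).choose 2 * (-1 : RatFunc ℚ) ^ (r k : ℕ))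
    = (-1 : RatFunc ℚ) ^ (m * n) * ((n : RatFunc ℚ) + 1) * RatFunc.X ^ (m * n.choose 2) := by
  haveI : NeZero (3 * m) := ⟨by omega⟩
  have hidx : ∀ k : Fin (3 * m),
      (⟨((k : ℕ) + 1) % (3 * m), Nat.mod_lt _ (by omega)⟩ : Fin (3 * m)) = k + 1 := by
    intro k
    have h := k.isLt
    apply Fin.ext
    rw [Fin.add_def, Fin.val_one']
    show ((k : ℕ) + 1) % (3 * m) = ((k : ℕ) + 1 % (3 * m)) % (3 * m)
    conv_lhs => rw [Nat.add_mod]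
    rw [Nat.mod_eq_of_lt h]
  have hsum : ∑ r : Fin (3 * m) → Fin (n + 1), ∏ k : Fin (3 * m),
      (qbin (n - (r k : ℕ)) (r ⟨((k : ℕ) + 1) % (3 * m), Nat.mod_lt _ (by omega)⟩ : ℕ) *
        RatFunc.X ^ ((r k : ℕ)).choose 2 * (-1 : RatFunc ℚ) ^ (r k : ℕ))
      = ∑ f : Fin (3 * m) → Fin (n + 1), ∏ k : Fin (3 * m), Mq n (f k) (f (k + 1)) := by
    apply Finset.sum_congr rfl
    intro f _
    apply Finset.prod_congr rfl
    intro k _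
    rw [hidx k]
    rfl
  rw [hsum, cyc' (Mq n) (3 * m), pow_mul, Mq_cube, smul_pow, one_pow, Matrix.trace_smul,
    Matrix.trace_one, smul_eq_mul, mul_pow, ← pow_mul, ← pow_mul,
    show n.choose 2 * m = m * n.choose 2 by ring, show n * m = m * n by ring]
  rw [Fintype.card_fin]
  push_cast
  ring
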